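/- Let P be a poset with least element 0 and let I, Z ⊆ P be subsets such that both I and Z are Z-complete and Z is Z-central. Then I ∩ Z has a greatest element z (equal to the supremum of I ∩ Z in P, which lies in I ∩ Z), and z is the unique element of Z such that for every y ∈ Z: y∧z = 0 if and only if the only element of I ∩ Z lying below y is 0. -/

import Mathlib

/-- `S` is `Z`-disjoint: there is `f : S → Z` with `p ≤ f p` and `f p ∧ f q = 0`
for distinct `p, q ∈ S`. -/
def ZDisjoint {β : Type*} [PartialOrder β] [OrderBot β] (Z S : Set β) : Prop :=
  ∃ f : β → β, (∀ p ∈ S, f p ∈ Z ∧ p ≤ f p) ∧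
    ∀ p ∈ S, ∀ q ∈ S, p ≠ q → Disjoint (f p) (f q)

/-- `I` is `Z`-complete: every `Z`-disjoint `S ⊆ I` has a supremum lying in `I`, and
whenever `{p, q}` is `Z`-disjoint with supremum in `I`, both `p` and `q` lie in `I`. -/
def ZComplete {β : Type*} [PartialOrder β] [OrderBot β] (Z I : Set β) : Prop :=
  (∀ S ⊆ I, ZDisjoint Z S → ∃ s, IsLUB S s ∧ s ∈ I) ∧
  (∀ p q s, ZDisjoint Z {p, q} → IsLUB {p, q} s → s ∈ I → p ∈ I ∧ q ∈ I)

/-- `Z` is `S`-central: for every `p ∈ S` and `y ∈ Z` there is `z ∈ Z` with `y ∧ z = 0`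
and `p` the supremum of some `q ≤ y` and `r ≤ z`. -/
def SCentral {β : Type*} [PartialOrder β] [OrderBot β] (Z S : Set β) : Prop :=
  ∀ p ∈ S, ∀ y ∈ Z, ∃ z ∈ Z, Disjoint y z ∧ ∃ q r, q ≤ y ∧ r ≤ z ∧ IsLUB {q, r} p
/-- If `I` and `Z` are `Z`-complete and `Z` is `Z`-central, then `I ∩ Z` has a greatest
element `z` (its supremum in `P`, lying in `I ∩ Z`), and `z` is the unique element of `Z`
such that for all `y ∈ Z`: `y ∧ z = 0` iff the only element of `I ∩ Z` below `y` is `0`. -/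

lemma botMem {β : Type*} [PartialOrder β] [OrderBot β] {Z I : Set β} (h : ZComplete Z I) :
    (⊥ : β) ∈ I := by
  obtain ⟨s, hs, hsI⟩ := h.1 ∅ (by simp) ⟨id, by simp, by simp⟩
  have hle : s ≤ ⊥ := hs.2 (fun x hx => hx.elim)
  rwa [le_bot_iff.mp hle] at hsI

lemma pairZD {β : Type*} [PartialOrder β] [OrderBot β] {Z : Set β} {y z q r : β}
    (hy : y ∈ Z) (hz : z ∈ Z) (hd : Disjoint y z) (hq : q ≤ y) (hr : r ≤ z) :
    ZDisjoint Z {q, r} := by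
  classical
  refine ⟨fun x => if x = q then y else z, ?_, ?_⟩
  · intro p hp
    by_cases hpq : p = q
    · subst hpq; simp [hy, hq]
    · have hpr : p = r := by
        rcases hp with h | h
        · exact absurd h hpq
        · exact Set.mem_singleton_iff.mp h
      subst hpr; simp [hpq, hz, hr]
  · intro p hp p' hp' hne
    by_cases hpq : p = q
    · have hp'r : p' = r := by
        rcases hp' with h | h
        · exact absurd (h.trans hpq.symm) hne.symm
        · exact Set.mem_singleton_iff.mp h
      have hp'q : p' ≠ q := fun h => hne (hpq.trans h.symm)
      simp only [if_pos hpq, if_neg hp'q]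
      exact hd
    · have hpr : p = r := by
        rcases hp with h | h
        · exact absurd h hpq
        · exact Set.mem_singleton_iff.mp h
      have hp'q : p' = q := by
        rcases hp' with h | h
        · exact h
        · exact absurd ((Set.mem_singleton_iff.mp h).trans hpr.symm) hne.symm
      simp only [if_neg hpq, if_pos hp'q]
      exact hd.symm

theorem stmt1 {α : Type*} [PartialOrder α] [OrderBot α] (I Z : Set α)
    (hI : ZComplete Z I) (hZ : ZComplete Z Z) (hcen : SCentral Z Z) :
    ∃ z, IsLUB (I ∩ Z) z ∧ z ∈ I ∩ Z ∧
      (∀ y ∈ Z, (Disjoint y z ↔ ∀ w ∈ I ∩ Z, w ≤ y → w = ⊥)) ∧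
      ∀ z' ∈ Z, (∀ y ∈ Z, (Disjoint y z' ↔ ∀ w ∈ I ∩ Z, w ≤ y → w = ⊥)) → z' = z := by
  classical
  have hbotI : (⊥:α) ∈ I := botMem hI
  have hbotZ : (⊥:α) ∈ Z := botMem hZ
  set C : Set (Set α) := {T : Set α | T ⊆ I ∩ Z ∧ T.Pairwise Disjoint} with hC
  have hchain : ∀ c ⊆ C, IsChain (· ⊆ ·) c → ∃ ub ∈ C, ∀ t ∈ c, t ⊆ ub := by
    intro c hc hch
    refine ⟨⋃₀ c, ⟨?_, ?_⟩, fun t ht => Set.subset_sUnion_of_mem ht⟩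
    · intro x hx; obtain ⟨t, htc, hxt⟩ := hx; exact (hc htc).1 hxt
    · intro x hx y hy hxy
      obtain ⟨t, htc, hxt⟩ := hx
      obtain ⟨u, huc, hyu⟩ := hy
      rcases hch.total htc huc with h | h
      · exact (hc huc).2 (h hxt) hyu hxy
      · exact (hc htc).2 hxt (h hyu) hxy
  obtain ⟨S, hSmax⟩ := zorn_subset C hchain
  obtain ⟨hSsub, hSpair⟩ := hSmax.prop
  have hSzd : ZDisjoint Z S :=
    ⟨id, fun p hp => ⟨(hSsub hp).2, le_rfl⟩, fun p hp q hq hne => hSpair hp hq hne⟩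
  obtain ⟨s, hslub, hsI⟩ := hI.1 S (fun x hx => (hSsub hx).1) hSzd
  have hsZ : s ∈ Z := by
    obtain ⟨s', hs'lub, hs'Z⟩ := hZ.1 S (fun x hx => (hSsub hx).2) hSzd
    rwa [hslub.unique hs'lub]
  -- s is the greatest element of I ∩ Z
  have hgreat : ∀ w ∈ I ∩ Z, w ≤ s := by
    intro w hw
    obtain ⟨z, hzZ, hdz, q, r, hq, hr, hlub⟩ := hcen w hw.2 s hsZ
    have hzd := pairZD hsZ hzZ hdz hq hr
    have hqrI := hI.2 q r w hzd hlub hw.1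
    have hqrZ := hZ.2 q r w hzd hlub hw.2
    have hrS : r ∈ S := by
      by_contra hrS
      have hrdisj : ∀ x ∈ S, Disjoint r x := fun x hx =>
        (hdz.mono (hslub.1 hx) hr).symm
      have hmem : insert r S ∈ C := by
        refine ⟨Set.insert_subset ⟨hqrI.2, hqrZ.2⟩ hSsub, ?_⟩
        rw [Set.pairwise_insert_of_symm]
        exact ⟨hSpair, fun b hb _ => hrdisj b hb⟩
      exact hrS (hSmax.2 hmem (Set.subset_insert _ _) (Set.mem_insert _ _))
    have hrbot : r = ⊥ := le_bot_iff.mp (hdz (hslub.1 hrS) hr)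
    subst hrbot
    have hwq : w ≤ q := hlub.2 (by rintro x (rfl | rfl); exacts [le_rfl, bot_le])
    exact hwq.trans hq
  refine ⟨s, ⟨fun w hw => hgreat w hw, fun b hb => hb ⟨hsI, hsZ⟩⟩, ⟨hsI, hsZ⟩, ?_, ?_⟩
  · intro y hyZ
    constructor
    · intro hd w hw hwy
      exact le_bot_iff.mp (hd hwy (hgreat w hw))
    · intro hall
      obtain ⟨z, hzZ, hdyz, q, r, hq, hr, hlub⟩ := hcen s hsZ y hyZ
      have hzd := pairZD hyZ hzZ hdyz hq hr
      have hqrI := hI.2 q r s hzd hlub hsI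
      have hqrZ := hZ.2 q r s hzd hlub hsZ
      have hqbot : q = ⊥ := hall q ⟨hqrI.1, hqrZ.1⟩ hq
      have hsr : s ≤ r := hlub.2 (by rintro x (rfl | rfl); exacts [hqbot ▸ bot_le, le_rfl])
      exact hdyz.mono_right (hsr.trans hr)
  · intro z' hz'Z hprop
    have h1 : s ≤ z' := by
      obtain ⟨z, hzZ, hd, q, r, hq, hr, hlub⟩ := hcen s hsZ z' hz'Z
      have hzd := pairZD hz'Z hzZ hd hq hr
      have hqrI := hI.2 q r s hzd hlub hsI
      have hqrZ := hZ.2 q r s hzd hlub hsZ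
      have hrbot : r = ⊥ := (hprop z hzZ).mp hd.symm r ⟨hqrI.2, hqrZ.2⟩ hr
      have : s ≤ q := hlub.2 (by rintro x (rfl | rfl); exacts [le_rfl, hrbot ▸ bot_le])
      exact this.trans hq
    have h2 : z' ≤ s := by
      obtain ⟨z, hzZ, hd, q, r, hq, hr, hlub⟩ := hcen z' hz'Z s hsZ
      have hdz : Disjoint z z' := by
        refine (hprop z hzZ).mpr ?_
        intro w hw hwz
        exact le_bot_iff.mp (hd (hgreat w hw) hwz)
      have hrbot : r = ⊥ := le_bot_iff.mp (hdz hr (hlub.1 (Set.mem_insert_of_mem _ rfl)))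
      have : z' ≤ q := hlub.2 (by rintro x (rfl | rfl); exacts [le_rfl, hrbot ▸ bot_le])
      exact this.trans hq
    exact le_antisymm h2 h1
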